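/- Let E and F be Hausdorff locally convex spaces over ℝ. For every u in E η F and every y' ∈ F', the linear functional x' ↦ y'(u(x')) on E' is the evaluation at a unique point u^t(y') of E; the resulting transpose map u^t : F'_μ → E is linear and continuous, so u^t ∈ F η E; and the map u ↦ u^t is a topological isomorphism from E η F onto F η E. -/

import Mathlib

open Filter Topology Set Bornology Pointwise

/-- A sequence in a locally convex space is *Mackey-Cauchy* if there are a bounded
absolutely convex set `B` and a double sequence of nonnegative reals `c` tending to `0`
such that `x n - x m ∈ c n m • B` for all `n, m`. -/
def MackeyCauchy (E : Type*) [AddCommGroup E] [Module ℝ E] [TopologicalSpace E]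
    (x : ℕ → E) : Prop :=
  ∃ (B : Set E) (c : ℕ → ℕ → ℝ),
    IsVonNBounded ℝ B ∧ Convex ℝ B ∧ Balanced ℝ B ∧
    (∀ n m, 0 ≤ c n m) ∧
    Tendsto (fun p : ℕ × ℕ => c p.1 p.2) atTop (𝓝 (0 : ℝ)) ∧
    ∀ n m, x n - x m ∈ c n m • B

/-- A locally convex space is *Mackey-complete* if every Mackey-Cauchy sequence converges. -/
def MackeyComplete (E : Type*) [AddCommGroup E] [Module ℝ E] [TopologicalSpace E] : Prop :=
  ∀ x : ℕ → E, MackeyCauchy E x → ∃ l : E, Tendsto x atTop (𝓝 l)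

/-- A locally convex space is *k-quasi-complete* if the closed absolutely convex hull of
every compact set is compact. -/
def KQuasiComplete (E : Type*) [AddCommGroup E] [Module ℝ E] [TopologicalSpace E] : Prop :=
  ∀ K : Set E, IsCompact K → IsCompact (closure (convexHull ℝ (balancedHull ℝ K)))

variable (E : Type*) [AddCommGroup E] [Module ℝ E] [TopologicalSpace E]

/-- The Arens dual `E'_c`: the topological dual with the topology of uniform convergence on
absolutely convex compact subsets of `E`. -/
abbrev ArensDual : Type _ :=
  UniformConvergenceCLM (RingHom.id ℝ) ℝ {K : Set E | Convex ℝ K ∧ Balanced ℝ K ∧ IsCompact K}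

/-- The Mackey dual `E'_μ`: the topological dual with the topology of uniform convergence on
absolutely convex weakly compact subsets of `E`. -/
abbrev MackeyDual : Type _ :=
  UniformConvergenceCLM (RingHom.id ℝ) ℝ
    {K : Set E | Convex ℝ K ∧ Balanced ℝ K ∧ IsCompact (⇑(toWeakSpace ℝ E) '' K)}

/-- The Schwartz ε-product `E ε F`: continuous linear maps from the Arens dual `E'_c` to `F`,
with the topology of uniform convergence on equicontinuous subsets of `E'`. -/
abbrev EpsProduct (F : Type*) [AddCommGroup F] [Module ℝ F] [TopologicalSpace F]
    [IsTopologicalAddGroup F] : Type _ :=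
  UniformConvergenceCLM (RingHom.id ℝ) F
    {H : Set (ArensDual E) | Equicontinuous fun f : H => (f.1 : E → ℝ)}

/-- The η-product `E η F`: continuous linear maps from the Mackey dual `E'_μ` to `F`,
with the topology of uniform convergence on equicontinuous subsets of `E'`. -/
abbrev EtaProduct (F : Type*) [AddCommGroup F] [Module ℝ F] [TopologicalSpace F]
    [IsTopologicalAddGroup F] : Type _ :=
  UniformConvergenceCLM (RingHom.id ℝ) F
    {H : Set (MackeyDual E) | Equicontinuous fun f : H => (f.1 : E → ℝ)}

section Inst
variable {E : Type*} [AddCommGroup E] [Module ℝ E] [TopologicalSpace E]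

instance weakSpace_continuousSMul : ContinuousSMul ℝ (WeakSpace ℝ E) :=
  WeakBilin.instContinuousSMul ((topDualPairing ℝ E).flip)

end Inst
section Aux
open Filter Topology Set Pointwise

theorem myIsCompact_convexJoin {M : Type*} [AddCommGroup M] [Module ℝ M] [TopologicalSpace M]
    [ContinuousAdd M] [ContinuousSMul ℝ M] {s t : Set M} (hs : IsCompact s) (ht : IsCompact t) :
    IsCompact (convexJoin ℝ s t) := by
  have h : convexJoin ℝ s t =
      (fun p : ℝ × M × M => (1 - p.1) • p.2.1 + p.1 • p.2.2) '' (Icc (0:ℝ) 1 ×ˢ s ×ˢ t) := by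
    ext z
    simp only [mem_convexJoin, Set.mem_image, Set.mem_prod, Prod.exists]
    constructor
    · rintro ⟨a, ha, b, hb, hz⟩
      rw [segment_eq_image ℝ] at hz
      obtain ⟨θ, hθ, rfl⟩ := hz
      exact ⟨θ, a, b, ⟨hθ, ha, hb⟩, rfl⟩
    · rintro ⟨θ, a, b, ⟨hθ, ha, hb⟩, rfl⟩
      refine ⟨a, ha, b, hb, ?_⟩
      rw [segment_eq_image ℝ]
      exact ⟨θ, hθ, rfl⟩
  rw [h]
  exact (isCompact_Icc.prod (hs.prod ht)).image (by fun_prop)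

theorem myIsCompact_convexHull_union {M : Type*} [AddCommGroup M] [Module ℝ M] [TopologicalSpace M]
    [ContinuousAdd M] [ContinuousSMul ℝ M] {s t : Set M} (hs : IsCompact s) (ht : IsCompact t)
    (hcs : Convex ℝ s) (hct : Convex ℝ t) : IsCompact (convexHull ℝ (s ∪ t)) := by
  rcases s.eq_empty_or_nonempty with rfl | hs₀
  · simpa [hct.convexHull_eq] using ht
  rcases t.eq_empty_or_nonempty with rfl | ht₀
  · simpa [hcs.convexHull_eq] using hs
  rw [Convex.convexHull_union hcs hct hs₀ ht₀]
  exact myIsCompact_convexJoin hs ht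

variable {E : Type*} [AddCommGroup E] [Module ℝ E] [TopologicalSpace E]

theorem mackeySets_zero_mem :
    ({0} : Set E) ∈ {K : Set E | Convex ℝ K ∧ Balanced ℝ K ∧
      IsCompact (⇑(toWeakSpace ℝ E) '' K)} := by
  refine ⟨convex_singleton 0, ?_, by simp⟩
  intro a _
  simp [Set.smul_set_singleton]

theorem mackeySets_directed :
    DirectedOn (· ⊆ ·) {K : Set E | Convex ℝ K ∧ Balanced ℝ K ∧
      IsCompact (⇑(toWeakSpace ℝ E) '' K)} := by
  rintro K₁ ⟨hc₁, hb₁, hk₁⟩ K₂ ⟨hc₂, hb₂, hk₂⟩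
  refine ⟨convexHull ℝ (K₁ ∪ K₂), ⟨convex_convexHull _ _, (hb₁.union hb₂).convexHull, ?_⟩,
    (Set.subset_union_left).trans (subset_convexHull _ _),
    (Set.subset_union_right).trans (subset_convexHull _ _)⟩
  have himg : ⇑(toWeakSpace ℝ E) '' convexHull ℝ (K₁ ∪ K₂)
      = convexHull ℝ ((⇑(toWeakSpace ℝ E) '' K₁) ∪ (⇑(toWeakSpace ℝ E) '' K₂)) := by
    rw [← Set.image_union]
    exact ((toWeakSpace ℝ E : E →ₗ[ℝ] WeakSpace ℝ E).image_convexHull _)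
  rw [himg]
  exact myIsCompact_convexHull_union hk₁ hk₂
    (hc₁.linear_image (toWeakSpace ℝ E : E →ₗ[ℝ] WeakSpace ℝ E))
    (hc₂.linear_image (toWeakSpace ℝ E : E →ₗ[ℝ] WeakSpace ℝ E))

theorem mackeySets_smul_mem {K : Set E} (hK : K ∈ {K : Set E | Convex ℝ K ∧ Balanced ℝ K ∧
      IsCompact (⇑(toWeakSpace ℝ E) '' K)}) (c : ℝ) :
    c • K ∈ {K : Set E | Convex ℝ K ∧ Balanced ℝ K ∧
      IsCompact (⇑(toWeakSpace ℝ E) '' K)} := by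
  obtain ⟨hc, hb, hk⟩ := hK
  refine ⟨hc.smul _, hb.smul _, ?_⟩
  have : ⇑(toWeakSpace ℝ E) '' (c • K) = c • (⇑(toWeakSpace ℝ E) '' K) := by
    ext y
    simp only [Set.mem_image, Set.mem_smul_set]
    constructor
    · rintro ⟨x, ⟨x', hx', rfl⟩, rfl⟩
      exact ⟨toWeakSpace ℝ E x', ⟨x', hx', rfl⟩, (map_smul _ _ _).symm⟩
    · rintro ⟨y', ⟨x', hx', rfl⟩, rfl⟩
      exact ⟨c • x', ⟨x', hx', rfl⟩, map_smul _ _ _⟩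
  rw [this]
  exact hk.smul c

end Aux
section Part2
open Filter Topology Set Pointwise

variable {E : Type*} [AddCommGroup E] [Module ℝ E] [TopologicalSpace E]

theorem mackeyDual_hasBasis :
    (𝓝 (0 : MackeyDual E)).HasBasis
      (fun SV : Set E × Set ℝ => (Convex ℝ SV.1 ∧ Balanced ℝ SV.1 ∧
        IsCompact (⇑(toWeakSpace ℝ E) '' SV.1)) ∧ SV.2 ∈ (𝓝 (0:ℝ)))
      (fun SV => {f : MackeyDual E | ∀ x ∈ SV.1, f x ∈ SV.2}) :=
  UniformConvergenceCLM.hasBasis_nhds_zero _ _ _ ⟨{0}, mackeySets_zero_mem⟩ mackeySets_directed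

/-- Every continuous linear functional on a weak topology comes from the other side
of the pairing. -/
theorem weakBilin_dual_repr {G W : Type*} [AddCommGroup G] [Module ℝ G] [AddCommGroup W]
    [Module ℝ W] (B : G →ₗ[ℝ] W →ₗ[ℝ] ℝ) (φ : WeakBilin B →L[ℝ] ℝ) :
    ∃ y : W, ∀ g : WeakBilin B, φ g = B g y := by
  have h1 : φ ⁻¹' (Metric.ball (0:ℝ) 1) ∈ 𝓝 (0 : WeakBilin B) :=
    φ.continuous.continuousAt (x := 0) (by simpa using Metric.ball_mem_nhds (0:ℝ) one_pos)
  obtain ⟨U, hU, hUsub⟩ := ((B.hasBasis_weakBilin).mem_iff).1 h1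
  obtain ⟨s, r, hr, rfl⟩ := (SeminormFamily.basisSets_iff _).1 hU
  have hker : (⨅ y : s, LinearMap.ker (B.flip (y : W))) ≤
      LinearMap.ker (φ : WeakBilin B →ₗ[ℝ] ℝ) := by
    intro g hg
    simp only [Submodule.mem_iInf, LinearMap.mem_ker] at hg
    have hgmem : ∀ c : ℝ, (c • g) ∈ (s.sup (B.toSeminormFamily)).ball 0 r := by
      intro c
      rw [Seminorm.mem_ball_zero]
      refine Seminorm.finset_sup_apply_lt hr (fun i hi => ?_)
      have : B g i = 0 := hg ⟨i, hi⟩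
      simpa [LinearMap.toSeminormFamily_apply, map_smul, this] using hr
    have habs : ∀ c : ℝ, |c| * |φ g| < 1 := by
      intro c
      have := hUsub (hgmem c)
      have h' : dist (φ (c • g)) 0 < 1 := this
      rw [dist_zero_right, Real.norm_eq_abs, show φ (c • g) = c * φ g from φ.map_smul c g,
        abs_mul] at h'
      exact h'
    change φ g = 0
    by_contra hne
    have h2 : 0 < |φ g| := abs_pos.2 hne
    have h3 := habs (2 / |φ g|)
    rw [abs_of_nonneg (by positivity), div_mul_cancel₀ _ h2.ne'] at h3
    norm_num at h3
  have hmem := mem_span_of_iInf_ker_le_ker (L := fun y : s => B.flip (y : W))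
    (K := (φ : WeakBilin B →ₗ[ℝ] ℝ)) hker
  have hsub : Submodule.span ℝ (Set.range fun y : s => B.flip (y : W)) ≤
      LinearMap.range B.flip :=
    Submodule.span_le.2 (by rintro _ ⟨y, rfl⟩; exact ⟨y, rfl⟩)
  obtain ⟨y, hy⟩ := hsub hmem
  refine ⟨y, fun g => ?_⟩
  have := LinearMap.congr_fun hy g
  exact this.symm

end Part2
section Part3
open Filter Topology Set Pointwise

variable {E : Type*} [AddCommGroup E] [Module ℝ E] [TopologicalSpace E]

/-- **Mackey–Arens**: every continuous linear functional on the Mackey dual is given by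
evaluation at a point of `E`. -/
theorem mackeyDual_dual_eval (f : MackeyDual E →L[ℝ] ℝ) :
    ∃ z : E, ∀ x' : MackeyDual E, f x' = x' z := by
  classical
  have h1 : f ⁻¹' (Metric.ball (0:ℝ) 1) ∈ 𝓝 (0 : MackeyDual E) :=
    f.continuous.continuousAt (x := 0) (by simpa using Metric.ball_mem_nhds (0:ℝ) one_pos)
  rw [mackeyDual_hasBasis.mem_iff] at h1
  obtain ⟨⟨K, V⟩, ⟨hK, hV⟩, hsub⟩ := h1
  obtain ⟨ε, hε, hball⟩ := Metric.mem_nhds_iff.1 hV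
  have hbdd : ∀ x' : MackeyDual E, (∀ x ∈ K, |x' x| ≤ 1) → |f x'| ≤ 2/ε := by
    intro x' hx'
    have hmem : ((ε/2) • x' : MackeyDual E) ∈ {g : MackeyDual E | ∀ x ∈ K, g x ∈ V} := by
      intro x hx
      apply hball
      have happ : ((ε/2) • x' : MackeyDual E) x = (ε/2) * x' x := rfl
      rw [Metric.mem_ball, dist_zero_right, happ, Real.norm_eq_abs, abs_mul,
        abs_of_nonneg (by positivity : (0:ℝ) ≤ ε/2)]
      calc ε/2 * |x' x| ≤ ε/2 * 1 :=
            mul_le_mul_of_nonneg_left (hx' x hx) (by positivity)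
        _ < ε := by linarith
    have h2 := hsub hmem
    simp only [Set.mem_preimage, Metric.mem_ball, dist_zero_right, Real.norm_eq_abs] at h2
    rw [map_smul, smul_eq_mul, abs_mul, abs_of_nonneg (by positivity : (0:ℝ) ≤ ε/2)] at h2
    rw [le_div_iff₀ hε]
    nlinarith [abs_nonneg (f x')]
  set M := 2/ε with hM
  have hMpos : 0 < M := by positivity
  obtain ⟨c, hcS, hc1, hc2⟩ :=
    mackeySets_directed _ (mackeySets_smul_mem hK M) _ mackeySets_zero_mem
  obtain ⟨hcConv, hcBal, hcCpt⟩ := hcS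
  have h0c : (0:E) ∈ c := hc2 rfl
  have hbound : ∀ x' : MackeyDual E, (∀ x ∈ c, |x' x| ≤ 1) → |f x'| ≤ 1 := by
    intro x' hx'
    have hx'' : ∀ x ∈ K, |(M • x' : MackeyDual E) x| ≤ 1 := by
      intro x hx
      have h3 : |x' (M • x)| ≤ 1 := hx' _ (hc1 (Set.smul_mem_smul_set hx))
      have happ : (M • x' : MackeyDual E) x = M * x' x := rfl
      rw [happ]
      rw [map_smul, smul_eq_mul] at h3
      exact h3
    have h4 := hbdd _ hx''
    rw [map_smul, smul_eq_mul, abs_mul, abs_of_nonneg hMpos.le] at h4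
    nlinarith
  -- the bipolar argument in the algebraic dual of `E'` with its weak topology
  let B : ((E →L[ℝ] ℝ) →ₗ[ℝ] ℝ) →ₗ[ℝ] (E →L[ℝ] ℝ) →ₗ[ℝ] ℝ := LinearMap.id
  let j : E →ₗ[ℝ] WeakBilin B :=
    { toFun := fun z =>
        { toFun := fun x' => x' z
          map_add' := fun _ _ => rfl
          map_smul' := fun _ _ => rfl }
      map_add' := fun a b => LinearMap.ext fun x' => map_add x' a b
      map_smul' := fun r a => LinearMap.ext fun x' => map_smul x' r a }
  haveI : T2Space (WeakBilin B) := (WeakBilin.isEmbedding (B := B) (fun a b h => h)).t2Space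
  let jc : Set (WeakBilin B) := j '' c
  have hjcompact : IsCompact jc := by
    have hcont : Continuous
        (fun z : WeakSpace ℝ E => (j ((toWeakSpace ℝ E).symm z) : WeakBilin B)) := by
      apply WeakBilin.continuous_of_continuous_eval
      intro y
      exact WeakBilin.eval_continuous ((topDualPairing ℝ E).flip) y
    have himg : jc = (fun z : WeakSpace ℝ E => (j ((toWeakSpace ℝ E).symm z) : WeakBilin B)) ''
        (⇑(toWeakSpace ℝ E) '' c) := by
      rw [Set.image_image]; rfl
    rw [himg]
    exact hcCpt.image hcont
  have hjconv : Convex ℝ jc := hcConv.linear_image j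
  let g₀ : WeakBilin B := (f : MackeyDual E →ₗ[ℝ] ℝ)
  by_cases hmem : g₀ ∈ jc
  · obtain ⟨z, hz, hjz⟩ := hmem
    refine ⟨z, fun x' => ?_⟩
    have h5 := LinearMap.congr_fun hjz x'
    exact h5.symm
  · exfalso
    obtain ⟨ψ, t, hψ1, hψ2⟩ :=
      geometric_hahn_banach_closed_point hjconv hjcompact.isClosed hmem
    have ht : 0 < t := by
      have h6 := hψ1 _ ⟨0, h0c, map_zero j⟩
      simpa using h6
    obtain ⟨y, hy⟩ := weakBilin_dual_repr B ψ
    have hyc : ∀ x ∈ c, |y x| < t := by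
      intro x hx
      have h7 : y x < t := by
        have h := hψ1 _ ⟨x, hx, rfl⟩
        rw [hy] at h
        exact h
      have h8 : y (-x) < t := by
        have hxm : -x ∈ c := hcBal (-1) (by norm_num) ⟨x, hx, by simp⟩
        have h := hψ1 _ ⟨-x, hxm, rfl⟩
        rw [hy] at h
        exact h
      rw [map_neg] at h8
      rw [abs_lt]
      constructor <;> linarith
    set x'c : E →L[ℝ] ℝ := t⁻¹ • y with hx'c
    have hxc : ∀ x ∈ c, |x'c x| ≤ 1 := by
      intro x hx
      have happ : x'c x = t⁻¹ * y x := rfl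
      rw [happ, abs_mul, abs_of_nonneg (inv_nonneg.2 ht.le)]
      calc t⁻¹ * |y x| ≤ t⁻¹ * t :=
            mul_le_mul_of_nonneg_left (hyc x hx).le (inv_nonneg.2 ht.le)
        _ = 1 := inv_mul_cancel₀ ht.ne'
    have hf1 : |f x'c| ≤ 1 := hbound x'c hxc
    have hfy : t < f y := by
      have h9 := hψ2
      rw [hy g₀] at h9
      exact h9
    have happ2 : f (show MackeyDual E from x'c) = t⁻¹ * f y := by
      have : (show MackeyDual E from x'c) = t⁻¹ • (show MackeyDual E from y) := rfl
      rw [this, map_smul, smul_eq_mul]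
    rw [happ2] at hf1
    have h10 : (1:ℝ) < t⁻¹ * f y := by
      have := mul_lt_mul_of_pos_left hfy (inv_pos.2 ht)
      rwa [inv_mul_cancel₀ ht.ne'] at this
    have := abs_le.1 hf1
    linarith [this.2]

end Part3
section Part4
open Filter Topology Set Bornology Pointwise

variable {E : Type*} [AddCommGroup E] [Module ℝ E] [TopologicalSpace E]
  [IsTopologicalAddGroup E] [ContinuousSMul ℝ E]

theorem myContinuous_of_forall_le_one {φ : E →ₗ[ℝ] ℝ} {U : Set E} (hU : U ∈ 𝓝 (0:E))
    (h : ∀ x ∈ U, |φ x| ≤ 1) : Continuous φ := by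
  apply continuous_of_continuousAt_zero φ
  rw [ContinuousAt, map_zero, Metric.tendsto_nhds]
  intro ε hε
  have hmem : (ε/2) • U ∈ 𝓝 (0:E) :=
    (set_smul_mem_nhds_zero_iff (by positivity : (ε/2) ≠ 0)).2 hU
  filter_upwards [hmem] with x hx
  obtain ⟨u, hu, rfl⟩ := hx
  rw [dist_zero_right, map_smul, smul_eq_mul, Real.norm_eq_abs, abs_mul,
    abs_of_nonneg (by positivity : (0:ℝ) ≤ ε/2)]
  calc ε/2 * |φ u| ≤ ε/2 * 1 := mul_le_mul_of_nonneg_left (h u hu) (by positivity)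
    _ < ε := by linarith

/-- **Alaoglu–Bourbaki**: the polar of a neighborhood of zero is weak-* compact. -/
theorem myIsCompact_polar {U : Set E} (hU : U ∈ 𝓝 (0:E)) :
    IsCompact {x' : WeakDual ℝ E | ∀ x ∈ U, |x' x| ≤ 1} := by
  classical
  have hinj : Function.Injective ⇑(topDualPairing ℝ E) := fun a b h =>
    ContinuousLinearMap.coe_injective h
  have hemb : IsEmbedding (fun (x' : WeakDual ℝ E) (x : E) => x' x) :=
    WeakBilin.isEmbedding hinj
  rw [hemb.isCompact_iff]
  set S : Set (E → ℝ) := {g | (∀ a b : E, g (a+b) = g a + g b) ∧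
      (∀ (c:ℝ) (a : E), g (c • a) = c * g a) ∧ ∀ x ∈ U, |g x| ≤ 1} with hSdef
  have himg : (fun (x' : WeakDual ℝ E) (x : E) => x' x) ''
      {x' : WeakDual ℝ E | ∀ x ∈ U, |x' x| ≤ 1} = S := by
    ext g
    constructor
    · rintro ⟨x', hx', rfl⟩
      exact ⟨fun a b => map_add x' a b, fun c a => map_smul x' c a, hx'⟩
    · rintro ⟨hadd, hsmul, hbd⟩
      let φℓ : E →ₗ[ℝ] ℝ :=
        { toFun := g, map_add' := hadd, map_smul' := hsmul }
      exact ⟨⟨φℓ, myContinuous_of_forall_le_one hU hbd⟩, hbd, rfl⟩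
  rw [himg]
  have hchoice : ∀ x : E, ∃ r : ℝ, ∀ g ∈ S, |g x| ≤ r := by
    intro x
    have h1 : ∀ᶠ a : ℝ in Bornology.cobounded ℝ, ({x} : Set E) ⊆ a • U :=
      (absorbent_nhds_zero hU) x
    obtain ⟨a, hax, _⟩ := (h1.and (eventually_cobounded_le_norm 1)).exists
    obtain ⟨u, hu, hux⟩ := hax rfl
    refine ⟨|a|, fun g hg => ?_⟩
    rw [← hux, hg.2.1, abs_mul]
    calc |a| * |g u| ≤ |a| * 1 := mul_le_mul_of_nonneg_left (hg.2.2 u hu) (abs_nonneg a)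
      _ = |a| := mul_one _
  choose r hr using hchoice
  have hsub : S ⊆ Set.pi Set.univ (fun x => Set.Icc (-(r x)) (r x)) := by
    intro g hg x _
    have := abs_le.1 (hr x g hg)
    exact ⟨this.1, this.2⟩
  have hclosed : IsClosed S := by
    have h1 : IsClosed {g : E → ℝ | ∀ a b : E, g (a+b) = g a + g b} := by
      simp only [Set.setOf_forall]
      exact isClosed_iInter fun a => isClosed_iInter fun b =>
        isClosed_eq (continuous_apply _) ((continuous_apply a).add (continuous_apply b))
    have h2 : IsClosed {g : E → ℝ | ∀ (c:ℝ) (a : E), g (c • a) = c * g a} := by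
      simp only [Set.setOf_forall]
      exact isClosed_iInter fun c => isClosed_iInter fun a =>
        isClosed_eq (continuous_apply _) ((continuous_const.mul (continuous_apply a)))
    have h3 : IsClosed {g : E → ℝ | ∀ x ∈ U, |g x| ≤ 1} := by
      simp only [Set.setOf_forall]
      exact isClosed_iInter fun x => isClosed_iInter fun _ =>
        isClosed_le (continuous_apply x).abs continuous_const
    have : S = {g : E → ℝ | ∀ a b : E, g (a+b) = g a + g b} ∩
        ({g : E → ℝ | ∀ (c:ℝ) (a : E), g (c • a) = c * g a} ∩
         {g : E → ℝ | ∀ x ∈ U, |g x| ≤ 1}) := by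
      rfl
    rw [this]
    exact h1.inter (h2.inter h3)
  exact IsCompact.of_isClosed_subset (isCompact_univ_pi fun x => isCompact_Icc) hclosed hsub

/-- The bipolar inclusion for a closed absolutely convex set containing zero. -/
theorem mem_of_polar_le [LocallyConvexSpace ℝ E] {U : Set E} (hUc : IsClosed U)
    (hconv : Convex ℝ U) (hbal : Balanced ℝ U) (h0 : (0:E) ∈ U) {z : E}
    (hz : ∀ x' : E →L[ℝ] ℝ, (∀ x ∈ U, |x' x| ≤ 1) → |x' z| ≤ 1) : z ∈ U := by
  by_contra hzU
  obtain ⟨φ, t, hφ1, hφ2⟩ := geometric_hahn_banach_closed_point hconv hUc hzU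
  have ht : 0 < t := by simpa using hφ1 0 h0
  have hpol : ∀ x ∈ U, |(t⁻¹ • φ) x| ≤ 1 := by
    intro x hx
    have h7 : φ x < t := hφ1 x hx
    have h8 : φ (-x) < t := hφ1 (-x) (hbal (-1) (by norm_num) ⟨x, hx, by simp⟩)
    rw [map_neg] at h8
    have habs : |φ x| ≤ t := abs_le.2 ⟨by linarith, h7.le⟩
    have happ : (t⁻¹ • φ) x = t⁻¹ * φ x := rfl
    rw [happ, abs_mul, abs_of_nonneg (inv_nonneg.2 ht.le)]
    calc t⁻¹ * |φ x| ≤ t⁻¹ * t := mul_le_mul_of_nonneg_left habs (inv_nonneg.2 ht.le)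
      _ = 1 := inv_mul_cancel₀ ht.ne'
  have hle := hz _ hpol
  have happ : (t⁻¹ • φ) z = t⁻¹ * φ z := rfl
  rw [happ] at hle
  have h10 : (1:ℝ) < t⁻¹ * φ z := by
    have := mul_lt_mul_of_pos_left hφ2 (inv_pos.2 ht)
    rwa [inv_mul_cancel₀ ht.ne'] at this
  have := abs_le.1 hle
  linarith [this.2]

theorem exists_closed_absConvex_nhd [LocallyConvexSpace ℝ E] {W : Set E} (hW : W ∈ 𝓝 (0:E)) :
    ∃ U, U ∈ 𝓝 (0:E) ∧ IsClosed U ∧ Convex ℝ U ∧ Balanced ℝ U ∧ U ⊆ W := by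
  obtain ⟨V, ⟨hV, hVc⟩, hVW⟩ := (closed_nhds_basis (0:E)).mem_iff.1 hW
  obtain ⟨A, ⟨hA, hAbal, hAconv⟩, hAV⟩ := (nhds_hasBasis_absConvex ℝ E).mem_iff.1 hV
  exact ⟨closure A, mem_of_superset hA subset_closure, isClosed_closure, hAconv.closure,
    hAbal.closure, (closure_minimal hAV hVc).trans hVW⟩

theorem equicontinuous_polar {U : Set E} (hU : U ∈ 𝓝 (0:E)) :
    Equicontinuous fun f : {x' : MackeyDual E | ∀ x ∈ U, |x' x| ≤ 1} => (f.1 : E → ℝ) := by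
  apply equicontinuous_of_equicontinuousAt_zero
    (fun f : {x' : MackeyDual E | ∀ x ∈ U, |x' x| ≤ 1} => f.1)
  rw [Metric.equicontinuousAt_iff_right]
  intro ε hε
  have hmem : (ε/2) • U ∈ 𝓝 (0:E) :=
    (set_smul_mem_nhds_zero_iff (by positivity : (ε/2) ≠ 0)).2 hU
  filter_upwards [hmem] with x hx i
  obtain ⟨u, hu, rfl⟩ := hx
  simp only [Function.comp_apply, map_zero, map_smul, smul_eq_mul, dist_zero_left]
  rw [Real.norm_eq_abs, abs_mul, abs_of_nonneg (by positivity : (0:ℝ) ≤ ε/2)]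
  calc ε/2 * |i.1 u| ≤ ε/2 * 1 := mul_le_mul_of_nonneg_left (i.2 u hu) (by positivity)
    _ < ε := by linarith

theorem equicontinuous_empty' {α X : Type*} [TopologicalSpace X] (g : α → X → ℝ) :
    Equicontinuous fun f : (∅ : Set α) => g f.1 :=
  fun _ _ _ => Filter.Eventually.of_forall (fun _ i => i.2.elim)

theorem equicontinuous_union' {α X : Type*} [TopologicalSpace X] {H₁ H₂ : Set α} {g : α → X → ℝ}
    (h₁ : Equicontinuous fun f : H₁ => g f.1) (h₂ : Equicontinuous fun f : H₂ => g f.1) :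
    Equicontinuous fun f : ↥(H₁ ∪ H₂) => g f.1 := by
  intro x V hV
  filter_upwards [h₁ x V hV, h₂ x V hV] with y hy1 hy2
  rintro ⟨i, hi | hi⟩
  exacts [hy1 ⟨i, hi⟩, hy2 ⟨i, hi⟩]

end Part4
section Part5
set_option linter.unusedSectionVars false
open Filter Topology Set Pointwise

variable {E F : Type*}
  [AddCommGroup E] [Module ℝ E] [TopologicalSpace E] [IsTopologicalAddGroup E]
  [ContinuousSMul ℝ E] [LocallyConvexSpace ℝ E] [T2Space E]
  [AddCommGroup F] [Module ℝ F] [TopologicalSpace F] [IsTopologicalAddGroup F]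
  [ContinuousSMul ℝ F] [LocallyConvexSpace ℝ F] [T2Space F]

theorem etaSets_directed : DirectedOn (· ⊆ ·)
    {H : Set (MackeyDual E) | Equicontinuous fun f : H => (f.1 : E → ℝ)} := by
  rintro H₁ h₁ H₂ h₂
  exact ⟨H₁ ∪ H₂, equicontinuous_union' h₁ h₂, Set.subset_union_left, Set.subset_union_right⟩

theorem etaProduct_hasBasis :
    (𝓝 (0 : EtaProduct E F)).HasBasis
      (fun SV : Set (MackeyDual E) × Set F =>
        (Equicontinuous fun f : SV.1 => (f.1 : E → ℝ)) ∧ SV.2 ∈ (𝓝 (0:F)))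
      (fun SV => {u : EtaProduct E F | ∀ x' ∈ SV.1, u x' ∈ SV.2}) :=
  UniformConvergenceCLM.hasBasis_nhds_zero _ _ _ ⟨∅, equicontinuous_empty' _⟩ etaSets_directed

theorem eval_injective {z w : E} (h : ∀ x' : MackeyDual E, x' z = x' w) : z = w := by
  by_contra hne
  obtain ⟨x', hx'⟩ := SeparatingDual.exists_separating_of_ne (R := ℝ) hne
  exact hx' (h (show MackeyDual E from x'))

noncomputable def trFun (u : EtaProduct E F) (y' : MackeyDual F) : E :=
  (mackeyDual_dual_eval
    ((show F →L[ℝ] ℝ from y').comp (show MackeyDual E →L[ℝ] F from u))).choose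

theorem trFun_spec (u : EtaProduct E F) (y' : MackeyDual F) (x' : MackeyDual E) :
    y' (u x') = x' (trFun u y') :=
  (mackeyDual_dual_eval
    ((show F →L[ℝ] ℝ from y').comp (show MackeyDual E →L[ℝ] F from u))).choose_spec x'

theorem trFun_unique (u : EtaProduct E F) (y' : MackeyDual F) {z : E}
    (hz : ∀ x' : MackeyDual E, y' (u x') = x' z) : z = trFun u y' :=
  eval_injective fun x' => by rw [← hz x', trFun_spec]

theorem trFun_add (u : EtaProduct E F) (y₁ y₂ : MackeyDual F) :
    trFun u (y₁ + y₂) = trFun u y₁ + trFun u y₂ := by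
  refine (trFun_unique u _ (fun x' => ?_)).symm
  have h0 : (y₁ + y₂) (u x') = y₁ (u x') + y₂ (u x') := rfl
  rw [h0, trFun_spec u y₁ x', trFun_spec u y₂ x', map_add]

theorem trFun_smul (u : EtaProduct E F) (c : ℝ) (y' : MackeyDual F) :
    trFun u (c • y') = c • trFun u y' := by
  refine (trFun_unique u _ (fun x' => ?_)).symm
  have h0 : (c • y') (u x') = c * y' (u x') := rfl
  rw [h0, trFun_spec u y' x', map_smul, smul_eq_mul]

noncomputable def trLin (u : EtaProduct E F) : MackeyDual F →ₗ[ℝ] E :=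
  { toFun := trFun u, map_add' := trFun_add u, map_smul' := trFun_smul u }

theorem trFun_continuous (u : EtaProduct E F) : Continuous (trFun u) := by
  apply continuous_of_continuousAt_zero (trLin u)
  rw [ContinuousAt, map_zero]
  intro W hW
  rw [Filter.mem_map]
  obtain ⟨U, hUnhd, hUcl, hUconv, hUbal, hUW⟩ := exists_closed_absConvex_nhd hW
  set P : Set (MackeyDual E) := {x' | ∀ x ∈ U, |x' x| ≤ 1} with hP
  have hPconv : Convex ℝ P := by
    intro a ha b hb s t hs ht hst
    intro x hx
    have h0 : (s • a + t • b : MackeyDual E) x = s * a x + t * b x := rfl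
    rw [h0]
    calc |s * a x + t * b x| ≤ |s * a x| + |t * b x| := abs_add_le _ _
      _ = s * |a x| + t * |b x| := by
          rw [abs_mul, abs_mul, abs_of_nonneg hs, abs_of_nonneg ht]
      _ ≤ s * 1 + t * 1 := by
          gcongr
          exacts [ha x hx, hb x hx]
      _ = 1 := by rw [mul_one, mul_one, hst]
  have hPbal : Balanced ℝ P := by
    intro a ha
    rintro _ ⟨x', hx', rfl⟩
    intro x hx
    have h0 : (a • x' : MackeyDual E) x = a * x' x := rfl
    rw [h0, abs_mul]
    calc |a| * |x' x| ≤ 1 * 1 := by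
          apply mul_le_mul ha (hx' x hx) (abs_nonneg _) zero_le_one
      _ = 1 := one_mul 1
  set uℓ : MackeyDual E →ₗ[ℝ] F :=
    ((show MackeyDual E →L[ℝ] F from u) : MackeyDual E →ₗ[ℝ] F) with huℓ
  set C : Set F := uℓ '' P with hC
  have hCconv : Convex ℝ C := hPconv.linear_image uℓ
  have hCbal : Balanced ℝ C := by
    intro a ha
    rintro _ ⟨_, ⟨x', hx', rfl⟩, rfl⟩
    exact ⟨a • x', hPbal a ha ⟨x', hx', rfl⟩, map_smul uℓ a x'⟩
  have hCcpt : IsCompact (⇑(toWeakSpace ℝ F) '' C) := by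
    have hPw : IsCompact {x' : WeakDual ℝ E | ∀ x ∈ U, |x' x| ≤ 1} := myIsCompact_polar hUnhd
    have hcont : Continuous (fun x' : WeakDual ℝ E =>
        toWeakSpace ℝ F (uℓ (show MackeyDual E from x'))) := by
      apply WeakBilin.continuous_of_continuous_eval
      intro y
      obtain ⟨z, hz⟩ := mackeyDual_dual_eval
        ((show F →L[ℝ] ℝ from y).comp (show MackeyDual E →L[ℝ] F from u))
      have heq : (fun x' : WeakDual ℝ E =>
          ((topDualPairing ℝ F).flip (toWeakSpace ℝ F (uℓ (show MackeyDual E from x')))) y)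
          = fun x' : WeakDual ℝ E => (topDualPairing ℝ E) x' z := by
        funext x'
        exact hz (show MackeyDual E from x')
      rw [heq]
      exact WeakBilin.eval_continuous _ z
    have himg : ⇑(toWeakSpace ℝ F) '' C = (fun x' : WeakDual ℝ E =>
        toWeakSpace ℝ F (uℓ (show MackeyDual E from x'))) ''
        {x' : WeakDual ℝ E | ∀ x ∈ U, |x' x| ≤ 1} := by
      rw [hC, Set.image_image]
      rfl
    rw [himg]
    exact hPw.image hcont
  have hN : {y' : MackeyDual F | ∀ y ∈ C, y' y ∈ Set.Icc (-1:ℝ) 1} ∈ 𝓝 (0 : MackeyDual F) :=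
    mackeyDual_hasBasis.mem_of_mem (i := (C, Set.Icc (-1:ℝ) 1))
      ⟨⟨hCconv, hCbal, hCcpt⟩, Icc_mem_nhds (by norm_num) (by norm_num)⟩
  refine Filter.mem_of_superset hN ?_
  intro y' hy'
  have hmem : trFun u y' ∈ U := by
    refine mem_of_polar_le hUcl hUconv hUbal (mem_of_mem_nhds hUnhd) ?_
    intro x' hx'
    have h1 := trFun_spec u y' (show MackeyDual E from x')
    rw [show x' (trFun u y') = y' (u (show MackeyDual E from x')) from h1.symm]
    have h2 : u (show MackeyDual E from x') ∈ C := ⟨show MackeyDual E from x', hx', rfl⟩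
    have h3 := hy' _ h2
    rw [Set.mem_Icc] at h3
    exact abs_le.2 h3
  exact hUW hmem

noncomputable def trCLM (u : EtaProduct E F) : EtaProduct F E :=
  show MackeyDual F →L[ℝ] E from ⟨trLin u, trFun_continuous u⟩

theorem trCLM_apply (u : EtaProduct E F) (y' : MackeyDual F) : trCLM u y' = trFun u y' := rfl

theorem trCLM_add (u v : EtaProduct E F) : trCLM (u + v) = trCLM u + trCLM v := by
  apply DFunLike.ext
  intro y'
  have h : ∀ x' : MackeyDual E, y' ((u + v) x') = x' (trFun u y' + trFun v y') := by
    intro x'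
    have h1 : (u + v) x' = u x' + v x' := rfl
    rw [h1, map_add, trFun_spec u y' x', trFun_spec v y' x', map_add]
  exact (trFun_unique (u + v) y' h).symm

theorem trCLM_smul (c : ℝ) (u : EtaProduct E F) : trCLM (c • u) = c • trCLM u := by
  apply DFunLike.ext
  intro y'
  have h : ∀ x' : MackeyDual E, y' ((c • u) x') = x' (c • trFun u y') := by
    intro x'
    have h1 : (c • u) x' = c • (u x') := rfl
    rw [h1, map_smul, trFun_spec u y' x', map_smul]
  exact (trFun_unique (c • u) y' h).symm

noncomputable def eLin : EtaProduct E F →ₗ[ℝ] EtaProduct F E :=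
  { toFun := trCLM, map_add' := trCLM_add, map_smul' := trCLM_smul }

theorem eLin_continuous : Continuous (eLin (E := E) (F := F)) := by
  apply continuous_of_continuousAt_zero
  rw [ContinuousAt, map_zero]
  intro W hW
  rw [Filter.mem_map]
  rw [(etaProduct_hasBasis (E := F) (F := E)).mem_iff] at hW
  obtain ⟨⟨H, V⟩, ⟨hHeq, hV⟩, hsub⟩ := hW
  obtain ⟨U, hUnhd, hUcl, hUconv, hUbal, hUV⟩ := exists_closed_absConvex_nhd hV
  have h1 : ∀ᶠ y in 𝓝 (0:F), ∀ i : H, dist ((i.1 : F → ℝ) 0) ((i.1 : F → ℝ) y) < 1 :=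
    (Metric.equicontinuousAt_iff_right.1 (hHeq 0)) 1 one_pos
  set VF : Set F := {y | ∀ i : H, |(i.1 : F → ℝ) y| < 1} with hVF
  have hVFnhd : VF ∈ 𝓝 (0:F) := by
    filter_upwards [h1] with y hy i
    have h2 := hy i
    rwa [map_zero, dist_zero_left, Real.norm_eq_abs] at h2
  have hsrc : {u : EtaProduct E F | ∀ x' ∈ {x' : MackeyDual E | ∀ x ∈ U, |x' x| ≤ 1},
      u x' ∈ VF} ∈ 𝓝 (0 : EtaProduct E F) :=
    (etaProduct_hasBasis (E := E) (F := F)).mem_of_mem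
      (i := ({x' : MackeyDual E | ∀ x ∈ U, |x' x| ≤ 1}, VF))
      ⟨equicontinuous_polar hUnhd, hVFnhd⟩
  refine Filter.mem_of_superset hsrc ?_
  intro u hu
  apply hsub
  intro y' hy'
  have hmem : trFun u y' ∈ U := by
    refine mem_of_polar_le hUcl hUconv hUbal (mem_of_mem_nhds hUnhd) ?_
    intro x' hx'
    have h3 := trFun_spec u y' (show MackeyDual E from x')
    have h4 : |y' (u (show MackeyDual E from x'))| ≤ 1 := (hu _ hx' ⟨y', hy'⟩).le
    rw [h3] at h4
    exact h4
  exact hUV hmem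

theorem tr_tr (u : EtaProduct E F) : trCLM (trCLM u) = u := by
  apply DFunLike.ext
  intro x'
  apply eval_injective (E := F)
  intro y'
  have h1 := trFun_spec (trCLM u) x' y'
  have h2 := trFun_spec u y' x'
  exact h1.symm.trans h2.symm

noncomputable def eCLM : EtaProduct E F →L[ℝ] EtaProduct F E :=
  ⟨eLin, eLin_continuous⟩

end Part5
theorem etaProduct_transpose_symm
    (E F : Type*)
    [AddCommGroup E] [Module ℝ E] [TopologicalSpace E] [IsTopologicalAddGroup E]
    [ContinuousSMul ℝ E] [LocallyConvexSpace ℝ E] [T2Space E]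
    [AddCommGroup F] [Module ℝ F] [TopologicalSpace F] [IsTopologicalAddGroup F]
    [ContinuousSMul ℝ F] [LocallyConvexSpace ℝ F] [T2Space F] :
    (∀ (u : EtaProduct E F) (y' : MackeyDual F),
      ∃! z : E, ∀ x' : MackeyDual E, y' (u x') = x' z) ∧
    ∃ e : EtaProduct E F ≃L[ℝ] EtaProduct F E,
      ∀ (u : EtaProduct E F) (y' : MackeyDual F) (x' : MackeyDual E),
        x' ((e u) y') = y' (u x') := by
  constructor
  · intro u y'
    exact ⟨trFun u y', fun x' => trFun_spec u y' x', fun w hw => trFun_unique u y' hw⟩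
  · refine ⟨ContinuousLinearEquiv.equivOfInverse (eCLM (E := E) (F := F))
      (eCLM (E := F) (F := E)) (fun u => tr_tr u) (fun v => tr_tr v), ?_⟩
    intro u y' x'
    exact (trFun_spec u y' x').symm
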